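/- Suppose φ = g − h is lower bounded, let γ > 0, 0 < λ < 2, and let the sequences be generated by u^k = prox_{γh}(s^k), v^k = prox_{γg}(s^k), s^{k+1} = s^k + λ(v^k − u^k) from any s^0 ∈ ℝ^p. Then the sequences (u^k) and (v^k) have the same set of cluster points Ω. Moreover, if (s^k) is bounded, then the sequence (φ_γ(s^k)) converges monotonically to a finite limit φ⋆, every u⋆ ∈ Ω is a stationary point of φ (i.e., ∂g(u⋆) ∩ ∂h(u⋆) ≠ ∅), and φ(u⋆) = φ⋆ for every u⋆ ∈ Ω. -/

import Mathlib

open scoped InnerProductSpace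
noncomputable section

/-- `ℝ^p` as a Euclidean space. -/
abbrev Euc (p : ℕ) := EuclideanSpace ℝ (Fin p)

variable {p : ℕ}

/-- `f : ℝ^p → ℝ ∪ {∞}` (modelled with `EReal` values never equal to `-∞`) is proper. -/
def ProperFun (f : Euc p → EReal) : Prop :=
  (∀ x, f x ≠ ⊥) ∧ (∃ x, f x ≠ ⊤)

/-- Convexity for extended-real-valued functions. -/
def ConvexFun (f : Euc p → EReal) : Prop :=
  ∀ x y : Euc p, ∀ t : ℝ, 0 ≤ t → t ≤ 1 →
    f (t • x + (1 - t) • y) ≤ (t : EReal) * f x + ((1 - t : ℝ) : EReal) * f y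

/-- The convex subdifferential `∂f(x)`. -/
def Subdiff (f : Euc p → EReal) (x : Euc p) : Set (Euc p) :=
  {v | ∀ z, f x + ((⟪v, z - x⟫_ℝ : ℝ) : EReal) ≤ f z}

/-- `u` minimizes `w ↦ f(w) + (1/(2γ))‖w − x‖²`. -/
def ProxObjMin (f : Euc p → EReal) (γ : ℝ) (x u : Euc p) : Prop :=
  ∀ w, f u + ((1/(2*γ) * ‖u - x‖^2 : ℝ) : EReal) ≤ f w + ((1/(2*γ) * ‖w - x‖^2 : ℝ) : EReal)

/-- `u = prox_{γf}(x)`: `u` is the unique minimizer of `w ↦ f(w) + (1/(2γ))‖w − x‖²`. -/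
def IsProxOf (f : Euc p → EReal) (γ : ℝ) (x u : Euc p) : Prop :=
  ProxObjMin f γ x u ∧ ∀ w, ProxObjMin f γ x w → w = u

/-- The Moreau envelope `f^γ(x) = inf_w { f(w) + (1/(2γ))‖w − x‖² }`, as an extended real. -/
def moreau (f : Euc p → EReal) (γ : ℝ) (x : Euc p) : EReal :=
  ⨅ w : Euc p, f w + ((1/(2*γ) * ‖w - x‖^2 : ℝ) : EReal)

/-- The (real-valued) Moreau envelope. -/
def moreauR (f : Euc p → EReal) (γ : ℝ) (x : Euc p) : ℝ := (moreau f γ x).toReal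

/-- The DC envelope `φ_γ = g^γ − h^γ`. -/
def dce (g h : Euc p → EReal) (γ : ℝ) (s : Euc p) : ℝ := moreauR g γ s - moreauR h γ s

/-- The DC function `φ = g − h`, with the convention `∞ − ∞ = ∞`. -/
def dcVal (g h : Euc p → EReal) (x : Euc p) : EReal :=
  if g x = ⊤ then ⊤ else g x - h x


section AuxLemmas
open Filter
variable {γ : ℝ}

private lemma prox_finite {f : Euc p → EReal} (hf : ProperFun f) {x u0 : Euc p}
    (hmin : ProxObjMin f γ x u0) : f u0 ≠ ⊥ ∧ f u0 ≠ ⊤ := by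
  refine ⟨hf.1 u0, ?_⟩
  obtain ⟨w, hw⟩ := hf.2
  intro htop
  have h1 := hmin w
  rw [htop, EReal.top_add_of_ne_bot (EReal.coe_ne_bot _)] at h1
  exact absurd (top_le_iff.1 h1) (EReal.add_lt_top hw (EReal.coe_ne_top _)).ne

private lemma moreau_eq_prox {f : Euc p → EReal} {x u0 : Euc p} (hmin : ProxObjMin f γ x u0) :
    moreau f γ x = f u0 + ((1/(2*γ) * ‖u0 - x‖^2 : ℝ) : EReal) :=
  le_antisymm (iInf_le _ u0) (le_iInf fun w => hmin w)

private lemma moreauR_eq_prox {f : Euc p → EReal} (hf : ProperFun f) {x u0 : Euc p}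
    (hmin : ProxObjMin f γ x u0) :
    moreauR f γ x = (f u0).toReal + 1/(2*γ) * ‖u0 - x‖^2 := by
  obtain ⟨hb, ht⟩ := prox_finite hf hmin
  rw [moreauR, moreau_eq_prox hmin, ← EReal.coe_toReal ht hb, ← EReal.coe_add, EReal.toReal_coe]
  simp

private lemma moreau_eq_coe {f : Euc p → EReal} (hf : ProperFun f) {x u0 : Euc p}
    (hmin : ProxObjMin f γ x u0) :
    moreau f γ x = ((moreauR f γ x : ℝ) : EReal) := by
  obtain ⟨hb, ht⟩ := prox_finite hf hmin
  rw [moreauR, moreau_eq_prox hmin, ← EReal.coe_toReal ht hb, ← EReal.coe_add, EReal.toReal_coe]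

private lemma subdiff_of_prox {f : Euc p → EReal} (hf : ProperFun f) (hconv : ConvexFun f)
    (hγ : 0 < γ) {x u0 : Euc p} (hmin : ProxObjMin f γ x u0) :
    γ⁻¹ • (x - u0) ∈ Subdiff f u0 := by
  intro z
  by_cases hz : f z = ⊤
  · rw [hz]; exact le_top
  obtain ⟨hb0, ht0⟩ := prox_finite hf hmin
  set a := (f u0).toReal with ha
  set b := (f z).toReal with hbb
  have hfu : f u0 = (a : EReal) := (EReal.coe_toReal ht0 hb0).symm
  have hfz : f z = (b : EReal) := (EReal.coe_toReal hz (hf.1 z)).symm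
  have hinner : ⟪γ⁻¹ • (x - u0), z - u0⟫_ℝ = γ⁻¹ * ⟪x - u0, z - u0⟫_ℝ :=
    real_inner_smul_left _ _ _
  have key : ∀ t : ℝ, 0 < t → t ≤ 1 →
      a + γ⁻¹ * ⟪x - u0, z - u0⟫_ℝ ≤ b + t * (‖z - u0‖^2 / (2*γ)) := by
    intro t ht0' ht1
    have hcv := hconv z u0 t ht0'.le ht1
    have hmin' := hmin (t • z + (1 - t) • u0)
    have hchain := le_trans hmin' (add_le_add_left hcv _)
    rw [hfu, hfz] at hchain
    have hEq : ((t : ℝ) : EReal) * ((b:ℝ) : EReal) + (((1 - t : ℝ)) : EReal) * ((a:ℝ):EReal)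
        + ((1/(2*γ) * ‖t • z + (1 - t) • u0 - x‖^2 : ℝ) : EReal)
        = ((t * b + (1-t) * a + 1/(2*γ) * ‖t • z + (1 - t) • u0 - x‖^2 : ℝ) : EReal) := by
      rw [← EReal.coe_mul, ← EReal.coe_mul, ← EReal.coe_add, ← EReal.coe_add]
    rw [hEq, ← EReal.coe_add, EReal.coe_le_coe_iff] at hchain
    have hexp : ‖t • z + (1 - t) • u0 - x‖^2
        = ‖u0 - x‖^2 + 2 * t * ⟪z - u0, u0 - x⟫_ℝ + t^2 * ‖z - u0‖^2 := by
      have : t • z + (1 - t) • u0 - x = t • (z - u0) + (u0 - x) := by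
        rw [smul_sub, sub_smul, one_smul]; abel
      rw [this, norm_add_sq_real, real_inner_smul_left, norm_smul, mul_pow]
      rw [Real.norm_eq_abs, sq_abs]; ring
    rw [hexp] at hchain
    have h2γ : (0:ℝ) < 2*γ := by linarith
    have hineq : t * a ≤ t * b + t * (γ⁻¹ * ⟪z - u0, u0 - x⟫_ℝ) + t * (t * (‖z - u0‖^2/(2*γ))) := by
      have e0 : 1/(2*γ) * (‖u0 - x‖^2 + 2 * t * ⟪z - u0, u0 - x⟫_ℝ + t^2 * ‖z - u0‖^2)
          = 1/(2*γ) * ‖u0 - x‖^2 + t * (γ⁻¹ * ⟪z - u0, u0 - x⟫_ℝ) + t * (t * (‖z - u0‖^2/(2*γ))) := by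
        field_simp
      linarith [hchain, e0]
    have := le_of_mul_le_mul_left
      (by linarith : t * a ≤ t * (b + γ⁻¹ * ⟪z - u0, u0 - x⟫_ℝ + t * (‖z - u0‖^2/(2*γ)))) ht0'
    have hcomm : ⟪x - u0, z - u0⟫_ℝ = - ⟪z - u0, u0 - x⟫_ℝ := by
      rw [show u0 - x = -(x - u0) from (neg_sub x u0).symm, inner_neg_right, real_inner_comm]; ring
    rw [hcomm]; linarith
  have hlim : Tendsto (fun n : ℕ => b + (1/(n+1) : ℝ) * (‖z - u0‖^2 / (2*γ))) atTop (nhds b) := by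
    have h0 : Tendsto (fun n : ℕ => (1/(n+1) : ℝ)) atTop (nhds 0) :=
      tendsto_one_div_add_atTop_nhds_zero_nat
    have := (h0.mul_const (‖z - u0‖^2 / (2*γ))).const_add b
    simpa using this
  have hfinal : a + γ⁻¹ * ⟪x - u0, z - u0⟫_ℝ ≤ b := by
    refine ge_of_tendsto hlim (Eventually.of_forall fun n => ?_)
    refine key (1/(n+1)) (by positivity) ?_
    rw [div_le_one (by positivity)]; linarith [Nat.cast_nonneg (α := ℝ) n]
  rw [hfu, hfz, hinner, ← EReal.coe_add, EReal.coe_le_coe_iff]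
  exact hfinal

private lemma moreau_lower {f : Euc p → EReal} (hf : ProperFun f) (hγ : 0 < γ) {x u0 : Euc p}
    (hmin : ProxObjMin f γ x u0) (hsub : γ⁻¹ • (x - u0) ∈ Subdiff f u0) (s' : Euc p) :
    ((moreauR f γ x + ⟪γ⁻¹ • (x - u0), s' - x⟫_ℝ : ℝ) : EReal) ≤ moreau f γ s' := by
  refine le_iInf fun w => ?_
  by_cases hw : f w = ⊤
  · rw [hw, EReal.top_add_of_ne_bot (EReal.coe_ne_bot _)]; exact le_top
  have hwb : f w ≠ ⊥ := hf.1 w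
  set c := (f w).toReal with hc
  have hfw : f w = (c : EReal) := (EReal.coe_toReal hw hwb).symm
  have hs := hsub w
  have hfin := (fun (h1 : f u0 ≠ ⊥) (h2 : f u0 ≠ ⊤) => And.intro h1 h2) (hf.1 u0) ?fin
  case fin =>
    intro htop
    rw [htop, EReal.top_add_of_ne_bot (EReal.coe_ne_bot _)] at hs
    rw [top_le_iff.1 hs] at hw; exact hw rfl
  set a := (f u0).toReal with ha
  have hfu : f u0 = (a : EReal) := (EReal.coe_toReal hfin.2 hfin.1).symm
  rw [hfu, hfw, ← EReal.coe_add, EReal.coe_le_coe_iff] at hs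
  rw [hfw, ← EReal.coe_add, EReal.coe_le_coe_iff]
  rw [moreauR_eq_prox hf hmin, ← ha]
  set d := w - s' with hd
  set e := x - u0 with he
  have harg : w - u0 - (s' - x) = d + e := by rw [hd, he]; abel
  have e1 : ⟪γ⁻¹ • e, w - u0⟫_ℝ - ⟪γ⁻¹ • e, s' - x⟫_ℝ = γ⁻¹ * (⟪e, d⟫_ℝ + ⟪e, e⟫_ℝ) := by
    rw [real_inner_smul_left, real_inner_smul_left, ← mul_sub, ← inner_sub_right, harg,
      inner_add_right]
  have e2 : ‖d + e‖^2 = ‖d‖^2 + 2*⟪d, e⟫_ℝ + ‖e‖^2 := norm_add_sq_real d e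
  have e3 : ⟪e, e⟫_ℝ = ‖e‖^2 := real_inner_self_eq_norm_sq e
  have e4 : ⟪e, d⟫_ℝ = ⟪d, e⟫_ℝ := real_inner_comm d e
  have main : ⟪γ⁻¹ • e, w - u0⟫_ℝ - ⟪γ⁻¹ • e, s' - x⟫_ℝ + 1/(2*γ)*‖d‖^2 - 1/(2*γ)*‖e‖^2
      = 1/(2*γ)*‖d + e‖^2 := by
    rw [e1, e2, e3, e4]; field_simp; ring
  have hnn : (0:ℝ) ≤ 1/(2*γ)*‖d + e‖^2 := by positivity
  have hu0x : ‖u0 - x‖^2 = ‖e‖^2 := by rw [he, ← norm_neg]; congr 1; abel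
  have hws : ‖w - s'‖^2 = ‖d‖^2 := by rw [hd]
  rw [hu0x, hws]
  linarith [hs, main, hnn]

private lemma moreau_gap {g h : Euc p → EReal} (hgp : ProperFun g) (hhp : ProperFun h)
    {c : ℝ} (hlb : ∀ x, (c : EReal) ≤ dcVal g h x) (x : Euc p) :
    moreau h γ x + (c : EReal) ≤ moreau g γ x := by
  refine le_iInf fun w => ?_
  by_cases hgw : g w = ⊤
  · rw [hgw, EReal.top_add_of_ne_bot (EReal.coe_ne_bot _)]; exact le_top
  have hlbw := hlb w
  rw [dcVal, if_neg hgw] at hlbw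
  have hgwb : g w ≠ ⊥ := hgp.1 w
  have hhwb : h w ≠ ⊥ := hhp.1 w
  have hhw : h w ≠ ⊤ := by
    intro htop
    rw [htop] at hlbw
    rw [show g w - ⊤ = ⊥ by
      rw [sub_eq_add_neg]; simp [EReal.add_bot]] at hlbw
    exact EReal.coe_ne_bot c (le_bot_iff.1 hlbw)
  set gw := (g w).toReal
  set hw := (h w).toReal
  have hg' : g w = (gw : EReal) := (EReal.coe_toReal hgw hgwb).symm
  have hh' : h w = (hw : EReal) := (EReal.coe_toReal hhw hhwb).symm
  rw [hg', hh', ← EReal.coe_sub, EReal.coe_le_coe_iff] at hlbw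
  have step : moreau h γ x ≤ h w + ((1/(2*γ) * ‖w - x‖^2 : ℝ) : EReal) := iInf_le _ w
  calc moreau h γ x + (c : EReal)
      ≤ (h w + ((1/(2*γ) * ‖w - x‖^2 : ℝ) : EReal)) + (c : EReal) := add_le_add_left step _
    _ ≤ g w + ((1/(2*γ) * ‖w - x‖^2 : ℝ) : EReal) := by
        rw [hg', hh', ← EReal.coe_add, ← EReal.coe_add, ← EReal.coe_add, EReal.coe_le_coe_iff]
        linarith

private lemma cluster_lemma {f : Euc p → EReal} (hfp : ProperFun f) (hfl : LowerSemicontinuous f)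
    {y w : ℕ → Euc p} {ystar wstar : Euc p}
    (hy : Tendsto y atTop (nhds ystar)) (hw : Tendsto w atTop (nhds wstar))
    (hsub : ∀ j, w j ∈ Subdiff f (y j)) :
    wstar ∈ Subdiff f ystar ∧ (f ystar ≠ ⊤ ∧ f ystar ≠ ⊥) ∧
      Tendsto (fun j => (f (y j)).toReal) atTop (nhds (f ystar).toReal) := by
  obtain ⟨z0, hz0⟩ := hfp.2
  have hfyt : ∀ j, f (y j) ≠ ⊤ := by
    intro j htop
    have h1 := hsub j z0
    rw [htop, EReal.top_add_of_ne_bot (EReal.coe_ne_bot _)] at h1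
    exact hz0 (top_le_iff.1 h1)
  set F : ℕ → ℝ := fun j => (f (y j)).toReal with hF
  have hfy : ∀ j, f (y j) = ((F j : ℝ) : EReal) := fun j =>
    (EReal.coe_toReal (hfyt j) (hfp.1 _)).symm
  have hip : ∀ z : Euc p,
      Tendsto (fun j => ⟪w j, z - y j⟫_ℝ) atTop (nhds ⟪wstar, z - ystar⟫_ℝ) := by
    intro z
    exact (hw.inner (tendsto_const_nhds.sub hy))
  have hbound : ∀ z : Euc p, f z ≠ ⊤ →
      f ystar ≤ (((f z).toReal - ⟪wstar, z - ystar⟫_ℝ : ℝ) : EReal) := by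
    intro z hz
    by_contra hcon
    push_neg at hcon
    obtain ⟨r, hr1, hr2⟩ := EReal.exists_between_coe_real hcon
    have hev1 : ∀ᶠ j in atTop, (r : EReal) < f (y j) :=
      hy.eventually (hfl ystar (r : EReal) hr2)
    have hev2 : ∀ᶠ j in atTop, F j ≤ (f z).toReal - ⟪w j, z - y j⟫_ℝ := by
      refine Eventually.of_forall fun j => ?_
      have h1 := hsub j z
      rw [hfy j, ← EReal.coe_add, ← EReal.coe_toReal hz (hfp.1 z), EReal.coe_le_coe_iff] at h1
      linarith
    have hle : (r:ℝ) ≤ (f z).toReal - ⟪wstar, z - ystar⟫_ℝ := by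
      refine ge_of_tendsto (tendsto_const_nhds.sub (hip z)) ?_
      filter_upwards [hev1, hev2] with j h1 h2
      rw [hfy j, EReal.coe_lt_coe_iff] at h1
      linarith
    rw [EReal.coe_lt_coe_iff] at hr1
    linarith
  have hfin : f ystar ≠ ⊤ ∧ f ystar ≠ ⊥ := by
    refine ⟨?_, hfp.1 _⟩
    intro htop
    have := hbound z0 hz0
    rw [htop] at this
    exact EReal.coe_ne_top _ (top_le_iff.1 this)
  set fstar := (f ystar).toReal with hfs
  have hfys : f ystar = ((fstar : ℝ) : EReal) := (EReal.coe_toReal hfin.1 hfin.2).symm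
  have hsubstar : wstar ∈ Subdiff f ystar := by
    intro z
    by_cases hz : f z = ⊤
    · rw [hz]; exact le_top
    have := hbound z hz
    rw [hfys, EReal.coe_le_coe_iff] at this
    rw [hfys, ← EReal.coe_add, ← EReal.coe_toReal hz (hfp.1 z), EReal.coe_le_coe_iff]
    linarith
  refine ⟨hsubstar, hfin, ?_⟩
  rw [tendsto_order]
  constructor
  · intro a ha
    have : (a : EReal) < f ystar := by rw [hfys, EReal.coe_lt_coe_iff]; exact ha
    filter_upwards [hy.eventually (hfl ystar (a : EReal) this)] with j hj
    rw [hfy j, gt_iff_lt, EReal.coe_lt_coe_iff] at hj; exact hj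
  · intro a ha
    have hub : ∀ j, F j ≤ fstar - ⟪w j, ystar - y j⟫_ℝ := by
      intro j
      have h1 := hsub j ystar
      rw [hfy j, ← EReal.coe_add, hfys, EReal.coe_le_coe_iff] at h1
      linarith
    have hlim : Tendsto (fun j => fstar - ⟪w j, ystar - y j⟫_ℝ) atTop (nhds fstar) := by
      have := (hip ystar)
      simp only [sub_self, inner_zero_right] at this
      simpa using tendsto_const_nhds.sub this
    filter_upwards [hlim.eventually (eventually_lt_nhds ha)] with j hj
    exact lt_of_le_of_lt (hub j) hj

private lemma descent {g h : Euc p → EReal} (hgp : ProperFun g) (hhp : ProperFun h)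
    (hhc : ConvexFun h) (hγ : 0 < γ) {lam : ℝ}
    {x uk vk x' : Euc p} (hx' : x' = x + lam • (vk - uk))
    (hmu : ProxObjMin h γ x uk) (hmv : ProxObjMin g γ x vk)
    {u' v' : Euc p} (hmu' : ProxObjMin h γ x' u') (hmv' : ProxObjMin g γ x' v') :
    moreauR g γ x' - moreauR h γ x' + lam*(2-lam)/(2*γ) * ‖vk - uk‖^2
      ≤ moreauR g γ x - moreauR h γ x := by
  set d := vk - uk with hd
  set e := vk - x with he
  set Gk := (g vk).toReal with hGk
  have hfv : g vk = ((Gk : ℝ) : EReal) :=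
    (EReal.coe_toReal (prox_finite hgp hmv).2 (prox_finite hgp hmv).1).symm
  have hi : moreauR g γ x' ≤ Gk + 1/(2*γ) * ‖e - lam • d‖^2 := by
    have h1 : moreau g γ x' ≤ g vk + ((1/(2*γ) * ‖vk - x'‖^2 : ℝ) : EReal) := iInf_le _ vk
    rw [moreau_eq_coe hgp hmv', hfv, ← EReal.coe_add, EReal.coe_le_coe_iff] at h1
    have harg : vk - x' = e - lam • d := by rw [hx', he, hd]; abel
    rwa [harg] at h1
  have hii : moreauR h γ x + γ⁻¹ * (lam * ⟪d - e, d⟫_ℝ) ≤ moreauR h γ x' := by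
    have h2 := moreau_lower hhp hγ hmu (subdiff_of_prox hhp hhc hγ hmu) x'
    rw [moreau_eq_coe hhp hmu', EReal.coe_le_coe_iff] at h2
    have harg : x' - x = lam • d := by rw [hx']; abel
    rw [harg, real_inner_smul_left, real_inner_smul_right] at h2
    have harg2 : x - uk = d - e := by rw [hd, he]; abel
    rwa [harg2] at h2
  have hiii : moreauR g γ x = Gk + 1/(2*γ) * ‖e‖^2 := by
    have := moreauR_eq_prox hgp hmv
    rwa [show vk - x = e from rfl] at this
  have exp1 : ‖e - lam • d‖^2 = ‖e‖^2 - 2*(lam*⟪e, d⟫_ℝ) + lam^2*‖d‖^2 := by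
    rw [norm_sub_sq_real, real_inner_smul_right, norm_smul, mul_pow, Real.norm_eq_abs, sq_abs]
  have exp2 : ⟪d - e, d⟫_ℝ = ‖d‖^2 - ⟪e, d⟫_ℝ := by
    rw [inner_sub_left, real_inner_self_eq_norm_sq]
  have idt : 1/(2*γ)*‖e - lam • d‖^2 - γ⁻¹*(lam*⟪d - e, d⟫_ℝ) + lam*(2-lam)/(2*γ)*‖d‖^2
      = 1/(2*γ)*‖e‖^2 := by
    rw [exp1, exp2]; field_simp; ring
  linarith [hi, hii, hiii, idt]

end AuxLemmas

open Filter in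
/-- the iterates `u^k = prox_{γh}(s^k)`, `v^k = prox_{γg}(s^k)`,
`s^{k+1} = s^k + λ(v^k − u^k)` are such that `(u^k)` and `(v^k)` have the same cluster points;
if moreover `(s^k)` is bounded, `(φ_γ(s^k))` decreases to a finite limit `φ⋆`, every cluster
point `u⋆` of `(u^k)` is stationary for `φ = g − h`, and `φ(u⋆) = φ⋆`. -/
theorem statement14
    (g h : Euc p → EReal)
    (hg_proper : ProperFun g) (hg_convex : ConvexFun g) (hg_lsc : LowerSemicontinuous g)
    (hh_proper : ProperFun h) (hh_convex : ConvexFun h) (hh_lsc : LowerSemicontinuous h)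
    (hlb : ∃ c : ℝ, ∀ x, (c : EReal) ≤ dcVal g h x)
    (γ : ℝ) (hγ : 0 < γ) (lam : ℝ) (hlam0 : 0 < lam) (hlam2 : lam < 2)
    (s u v : ℕ → Euc p)
    (hu : ∀ k, IsProxOf h γ (s k) (u k)) (hv : ∀ k, IsProxOf g γ (s k) (v k))
    (hs : ∀ k, s (k+1) = s k + lam • (v k - u k)) :
    {x : Euc p | MapClusterPt x atTop u} = {x : Euc p | MapClusterPt x atTop v} ∧
      (Bornology.IsBounded (Set.range s) →
        ∃ φstar : ℝ,
          Antitone (fun k => dce g h γ (s k)) ∧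
          Tendsto (fun k => dce g h γ (s k)) atTop (nhds φstar) ∧
          ∀ ustar : Euc p, MapClusterPt ustar atTop u →
            (Subdiff g ustar ∩ Subdiff h ustar).Nonempty ∧
              dcVal g h ustar = (φstar : EReal)) := by
  -- abbreviations
  set D : ℕ → ℝ := fun k => dce g h γ (s k) with hD
  obtain ⟨c, hlb'⟩ := hlb
  have h2lam : (0:ℝ) < 2 - lam := by linarith
  have hβ : 0 < lam*(2-lam)/(2*γ) := div_pos (mul_pos hlam0 h2lam) (by linarith)
  -- descent inequality
  have hkey : ∀ k, D (k+1) + lam*(2-lam)/(2*γ) * ‖v k - u k‖^2 ≤ D k := fun k =>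
    descent hg_proper hh_proper hh_convex hγ (hs k) (hu k).1 (hv k).1 (hu (k+1)).1 (hv (k+1)).1
  have hAnt : Antitone D := antitone_nat_of_succ_le fun k => by
    have h1 := hkey k
    have h2 : 0 ≤ lam*(2-lam)/(2*γ) * ‖v k - u k‖^2 := by positivity
    linarith
  -- lower bound
  have hlbD : ∀ k, c ≤ D k := by
    intro k
    have hgap := moreau_gap (γ := γ) hg_proper hh_proper hlb' (s k)
    rw [moreau_eq_coe hg_proper (hv k).1, moreau_eq_coe hh_proper (hu k).1, ← EReal.coe_add,
      EReal.coe_le_coe_iff] at hgap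
    simp only [hD, dce]
    linarith
  have hbdd : BddBelow (Set.range D) := ⟨c, by rintro _ ⟨k, rfl⟩; exact hlbD k⟩
  have htend : Tendsto D atTop (nhds (⨅ k, D k)) := tendsto_atTop_ciInf hAnt hbdd
  -- ‖v - u‖ → 0
  have h1 : Tendsto (fun k => D k - D (k+1)) atTop (nhds 0) := by
    have := htend.sub (htend.comp (tendsto_add_atTop_nat 1))
    simpa using this
  have h2 : Tendsto (fun k => lam*(2-lam)/(2*γ) * ‖v k - u k‖^2) atTop (nhds 0) :=
    tendsto_of_tendsto_of_tendsto_of_le_of_le tendsto_const_nhds h1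
      (fun k => by positivity) (fun k => by linarith [hkey k])
  have hsq : Tendsto (fun k => ‖v k - u k‖^2) atTop (nhds 0) := by
    have h3 := h2.const_mul (lam*(2-lam)/(2*γ))⁻¹
    simp only [← mul_assoc, inv_mul_cancel₀ hβ.ne', one_mul, mul_zero] at h3
    exact h3
  have hnorm : Tendsto (fun k => ‖v k - u k‖) atTop (nhds 0) := by
    have hcont := (Real.continuous_sqrt.tendsto 0).comp hsq
    have heq : (fun k => Real.sqrt (‖v k - u k‖^2)) = fun k => ‖v k - u k‖ :=
      funext fun k => Real.sqrt_sq (norm_nonneg _)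
    rw [show Real.sqrt 0 = 0 from Real.sqrt_zero] at hcont
    rwa [show Real.sqrt ∘ (fun k => ‖v k - u k‖^2) = fun k => Real.sqrt (‖v k - u k‖^2) from rfl,
      heq] at hcont
  have hvu : Tendsto (fun k => v k - u k) atTop (nhds 0) :=
    tendsto_zero_iff_norm_tendsto_zero.2 hnorm
  -- cluster point transfer
  have hclus : ∀ (a b : ℕ → Euc p), Tendsto (fun k => b k - a k) atTop (nhds 0) →
      ∀ x, MapClusterPt x atTop a → MapClusterPt x atTop b := by
    intro a b hab x hx
    obtain ⟨ψ, hψ, hlim⟩ := TopologicalSpace.FirstCountableTopology.tendsto_subseq hx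
    have hmono := hψ.tendsto_atTop
    have h1 : Tendsto (fun j => b (ψ j) - a (ψ j) + a (ψ j)) atTop (nhds (0 + x)) :=
      (hab.comp hmono).add hlim
    simp only [sub_add_cancel, zero_add] at h1
    exact MapClusterPt.of_comp hmono h1.mapClusterPt
  have huv : Tendsto (fun k => u k - v k) atTop (nhds 0) := by
    have := hvu.neg
    simpa [neg_sub] using this
  constructor
  · ext x
    exact ⟨hclus u v hvu x, hclus v u huv x⟩
  -- bounded part
  intro hsbdd
  refine ⟨⨅ k, D k, hAnt, htend, ?_⟩
  intro ustar hustar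
  obtain ⟨ψ, hψ, hψlim⟩ := TopologicalSpace.FirstCountableTopology.tendsto_subseq hustar
  obtain ⟨sstar, -, ψ₂, hψ₂, hslim⟩ :=
    tendsto_subseq_of_bounded hsbdd (fun j => Set.mem_range_self (ψ j) : ∀ j, (s ∘ ψ) j ∈ Set.range s)
  set σ : ℕ → ℕ := ψ ∘ ψ₂ with hσ
  have hσm : StrictMono σ := hψ.comp hψ₂
  have hu_σ : Tendsto (u ∘ σ) atTop (nhds ustar) := hψlim.comp hψ₂.tendsto_atTop
  have hs_σ : Tendsto (s ∘ σ) atTop (nhds sstar) := hslim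
  have hv_σ : Tendsto (v ∘ σ) atTop (nhds ustar) := by
    have h1 : Tendsto (fun j => (v (σ j) - u (σ j)) + u (σ j)) atTop (nhds (0 + ustar)) :=
      (hvu.comp hσm.tendsto_atTop).add hu_σ
    simpa [Function.comp_def] using h1
  set wstar : Euc p := γ⁻¹ • (sstar - ustar) with hwstar
  have hwh : Tendsto (fun j => γ⁻¹ • (s (σ j) - u (σ j))) atTop (nhds wstar) :=
    (hs_σ.sub hu_σ).const_smul γ⁻¹
  have hwg : Tendsto (fun j => γ⁻¹ • (s (σ j) - v (σ j))) atTop (nhds wstar) :=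
    (hs_σ.sub hv_σ).const_smul γ⁻¹
  have clusterH := cluster_lemma hh_proper hh_lsc hu_σ hwh
    (fun j => subdiff_of_prox hh_proper hh_convex hγ (hu (σ j)).1)
  have clusterG := cluster_lemma hg_proper hg_lsc hv_σ hwg
    (fun j => subdiff_of_prox hg_proper hg_convex hγ (hv (σ j)).1)
  refine ⟨⟨wstar, clusterG.1, clusterH.1⟩, ?_⟩
  -- value convergence
  set gstar := (g ustar).toReal with hgstar
  set hstar := (h ustar).toReal with hhstar
  have hDσ : ∀ j, D (σ j) = ((g (v (σ j))).toReal + 1/(2*γ)*‖v (σ j) - s (σ j)‖^2)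
      - ((h (u (σ j))).toReal + 1/(2*γ)*‖u (σ j) - s (σ j)‖^2) := by
    intro j
    simp only [hD, dce]
    rw [moreauR_eq_prox hg_proper (hv (σ j)).1, moreauR_eq_prox hh_proper (hu (σ j)).1]
  have t1 : Tendsto (fun j => ‖v (σ j) - s (σ j)‖^2) atTop (nhds (‖ustar - sstar‖^2)) :=
    ((hv_σ.sub hs_σ).norm).pow 2
  have t2 : Tendsto (fun j => ‖u (σ j) - s (σ j)‖^2) atTop (nhds (‖ustar - sstar‖^2)) :=
    ((hu_σ.sub hs_σ).norm).pow 2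
  have hlim2 : Tendsto (fun j => D (σ j)) atTop
      (nhds ((gstar + 1/(2*γ)*‖ustar - sstar‖^2) - (hstar + 1/(2*γ)*‖ustar - sstar‖^2))) := by
    have := (clusterG.2.2.add (t1.const_mul (1/(2*γ)))).sub
      (clusterH.2.2.add (t2.const_mul (1/(2*γ))))
    refine this.congr fun j => ?_
    simp only [Function.comp_apply]
    rw [hDσ j]
  have hlim3 : Tendsto (fun j => D (σ j)) atTop (nhds (⨅ k, D k)) :=
    htend.comp hσm.tendsto_atTop
  have huniq : (⨅ k, D k) = gstar - hstar := by
    have := tendsto_nhds_unique hlim3 hlim2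
    rw [this]; ring
  rw [dcVal, if_neg clusterG.2.1.1, ← EReal.coe_toReal clusterG.2.1.1 clusterG.2.1.2,
    ← EReal.coe_toReal clusterH.2.1.1 clusterH.2.1.2, ← EReal.coe_sub, huniq]
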